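/- Let H, S be finite-dimensional real inner product spaces, L self-adjoint positive definite on H, B : H → S surjective, and T := ((B L⁻¹ Bᵀ)⁻¹) the Schur complement operator on S. Then T is self-adjoint positive definite, and for every s ∈ S, ⟨T s, s⟩ = min{ ⟨L v, v⟩ : v ∈ H, B(v) = s }, i.e. the Schur complement energy equals the minimal energy over all liftings. -/

import Mathlib

/-- For `L` self-adjoint positive definite on `H`, `B : H → S` surjective,
and the Schur complement `T := (B L⁻¹ Bᵀ)⁻¹`, the operator `T` is self-adjoint positive
definite and its quadratic form is the minimal lifting energy:
`⟨T s, s⟩ = min { ⟨L v, v⟩ : B v = s }`. -/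
theorem stmt19
    {H S : Type*} [NormedAddCommGroup H] [InnerProductSpace ℝ H]
    [FiniteDimensional ℝ H] [NormedAddCommGroup S] [InnerProductSpace ℝ S]
    [FiniteDimensional ℝ S]
    (L : H →ₗ[ℝ] H)
    (hLsa : LinearMap.adjoint L = L)
    (hLpos : ∀ u : H, u ≠ 0 → (0 : ℝ) < inner ℝ (L u) u)
    (Linv : H →ₗ[ℝ] H)
    (hL1 : L ∘ₗ Linv = LinearMap.id) (hL2 : Linv ∘ₗ L = LinearMap.id)
    (B : H →ₗ[ℝ] S) (hB : Function.Surjective B)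
    (T : S →ₗ[ℝ] S)
    (hT1 : T ∘ₗ (B ∘ₗ Linv ∘ₗ LinearMap.adjoint B) = LinearMap.id)
    (hT2 : (B ∘ₗ Linv ∘ₗ LinearMap.adjoint B) ∘ₗ T = LinearMap.id) :
    LinearMap.adjoint T = T ∧
    (∀ s : S, s ≠ 0 → (0 : ℝ) < inner ℝ (T s) s) ∧
    (∀ s : S, IsLeast {e : ℝ | ∃ v : H, B v = s ∧ e = inner ℝ (L v) v}
      (inner ℝ (T s) s)) := by
  set M : S →ₗ[ℝ] S := B ∘ₗ Linv ∘ₗ LinearMap.adjoint B with hM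
  -- Linv is self-adjoint
  have hLinvsa : LinearMap.adjoint Linv = Linv := by
    have h1 : LinearMap.adjoint Linv ∘ₗ L = LinearMap.id := by
      have := congrArg LinearMap.adjoint hL1
      rw [LinearMap.adjoint_comp, hLsa] at this
      rw [this]
      exact ((LinearMap.eq_adjoint_iff (LinearMap.id : H →ₗ[ℝ] H) LinearMap.id).mpr
        (fun x y => rfl)).symm
    calc LinearMap.adjoint Linv
        = LinearMap.adjoint Linv ∘ₗ (L ∘ₗ Linv) := by rw [hL1]; rfl
      _ = (LinearMap.adjoint Linv ∘ₗ L) ∘ₗ Linv := by rw [LinearMap.comp_assoc]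
      _ = Linv := by rw [h1]; rfl
  have hMsa : LinearMap.adjoint M = M := by
    rw [hM, LinearMap.adjoint_comp, LinearMap.adjoint_comp, LinearMap.adjoint_adjoint,
      hLinvsa, LinearMap.comp_assoc]
  have hTsa : LinearMap.adjoint T = T := by
    have hMT : M ∘ₗ LinearMap.adjoint T = LinearMap.id := by
      have := congrArg LinearMap.adjoint hT1
      rw [LinearMap.adjoint_comp, hMsa] at this
      rw [this]
      exact ((LinearMap.eq_adjoint_iff (LinearMap.id : S →ₗ[ℝ] S) LinearMap.id).mpr
        (fun x y => rfl)).symm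
    calc LinearMap.adjoint T
        = (T ∘ₗ M) ∘ₗ LinearMap.adjoint T := by rw [hT1]; rfl
      _ = T ∘ₗ (M ∘ₗ LinearMap.adjoint T) := by rw [LinearMap.comp_assoc]
      _ = T := by rw [hMT]; rfl
  -- key construction
  have key : ∀ s : S, ∃ v0 : H, B v0 = s ∧ (inner ℝ (L v0) v0 : ℝ) = inner ℝ (T s) s ∧
      ∀ u : H, B u = 0 → (inner ℝ (L v0) u : ℝ) = 0 := by
    intro s
    refine ⟨Linv (LinearMap.adjoint B (T s)), ?_, ?_, ?_⟩
    · have := congrArg (fun f : S →ₗ[ℝ] S => f s) hT2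
      simpa [hM, LinearMap.comp_apply] using this
    · have hLv0 : L (Linv (LinearMap.adjoint B (T s))) = LinearMap.adjoint B (T s) := by
        have := congrArg (fun f : H →ₗ[ℝ] H => f (LinearMap.adjoint B (T s))) hL1
        simpa [LinearMap.comp_apply] using this
      have hBv0 : B (Linv (LinearMap.adjoint B (T s))) = s := by
        have := congrArg (fun f : S →ₗ[ℝ] S => f s) hT2
        simpa [hM, LinearMap.comp_apply] using this
      rw [hLv0, LinearMap.adjoint_inner_left, hBv0]
    · intro u hu
      have hLv0 : L (Linv (LinearMap.adjoint B (T s))) = LinearMap.adjoint B (T s) := by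
        have := congrArg (fun f : H →ₗ[ℝ] H => f (LinearMap.adjoint B (T s))) hL1
        simpa [LinearMap.comp_apply] using this
      rw [hLv0, LinearMap.adjoint_inner_left, hu, inner_zero_right]
  have hLnn : ∀ u : H, (0 : ℝ) ≤ inner ℝ (L u) u := by
    intro u
    by_cases h : u = 0
    · simp [h]
    · exact le_of_lt (hLpos u h)
  refine ⟨hTsa, ?_, ?_⟩
  · intro s hs
    obtain ⟨v0, hBv0, hE, _⟩ := key s
    have hv0 : v0 ≠ 0 := fun h => hs (by rw [← hBv0, h, map_zero])
    rw [← hE]; exact hLpos v0 hv0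
  · intro s
    obtain ⟨v0, hBv0, hE, horth⟩ := key s
    constructor
    · exact ⟨v0, hBv0, hE.symm⟩
    · rintro e ⟨v, hBv, rfl⟩
      have hu : B (v - v0) = 0 := by rw [map_sub, hBv, hBv0, sub_self]
      have h1 : (inner ℝ (L v0) (v - v0) : ℝ) = 0 := horth _ hu
      have h2 : (inner ℝ (L (v - v0)) v0 : ℝ) = 0 := by
        rw [real_inner_comm, ← LinearMap.adjoint_inner_left, hLsa]
        exact h1
      have hdec : (inner ℝ (L v) v : ℝ)
          = inner ℝ (L v0) v0 + inner ℝ (L (v - v0)) (v - v0) := by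
        have hv : v = v0 + (v - v0) := by abel
        calc (inner ℝ (L v) v : ℝ)
            = inner ℝ (L (v0 + (v - v0))) (v0 + (v - v0)) := by rw [← hv]
          _ = inner ℝ (L v0) v0 + inner ℝ (L (v - v0)) (v - v0) := by
                rw [map_add, inner_add_left, inner_add_right, inner_add_right, h1, h2]
                ring
      rw [← hE, hdec]
      have := hLnn (v - v0)
      linarith
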